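/- (Telescoping / simulation lemma.) Let M and M̂ be two MDPs sharing the state space S, action space A, bounded measurable reward r, initial distribution μ₀, and discount γ ∈ [0,1), but with possibly different Markov transition kernels T and T̂ respectively. For a policy π define G^π(s, a) := ∫_S V_M^π(s') dT̂(s'|s,a) − ∫_S V_M^π(s') dT(s'|s,a). Then for every policy π: η_{M̂}(π) − η_M(π) = γ · Σ_{t=0}^∞ γ^t E_{T̂,μ₀}^π[ G^π(s_t, a_t) ], where the expectation on the right is over trajectories generated by (μ₀, π, T̂). -/

import Mathlib

/-!
Formalization of an MDP `M = (S, A, T, r, μ₀, γ)`: measurable state space `S`, measurable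
action space `A`, Markov transition kernel `T : Kernel (S × A) S`, bounded measurable reward
`r : S × A → ℝ`, initial distribution `μ₀`, discount `γ ∈ [0,1)`.  A policy is a Markov kernel
`π : Kernel S A`.  The trajectory distribution generated by `(μ₀, π, T)` via the
Ionescu–Tulcea construction has time-`t` state-action marginal given by iterating the
one-step kernel; the value function `V_M^π` and expected return `η_M(π)` are expressed through
these marginals via `V_M^π(s) = ∑_t γ^t E[r(s_t, a_t)]` (Fubini applied to the discounted sum).
-/

open MeasureTheory ProbabilityTheory

variable {S A : Type*} [MeasurableSpace S] [MeasurableSpace A]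

/-- Kernel sending a state `s` to the distribution of the pair `(s, a)` with `a ~ π(·|s)`. -/
noncomputable def stateAction (π : Kernel S A) [IsSFiniteKernel π] :
    Kernel S (S × A) :=
  Kernel.id ×ₖ π

/-- One step of the state-action Markov chain: from `(s, a)`, sample `s' ~ T(·|s, a)` and then
`a' ~ π(·|s')`. -/
noncomputable def saStep (π : Kernel S A) [IsSFiniteKernel π] (T : Kernel (S × A) S) :
    Kernel (S × A) (S × A) :=
  (stateAction π) ∘ₖ T

/-- Distribution of the state-action pair `(s_t, a_t)` at time `t` as a kernel from the initial
state `s₀ = s`, for the Markov chain generated by policy `π` and dynamics `T` (the time-`t`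
marginal of the Ionescu–Tulcea trajectory distribution with `a_t ~ π(·|s_t)`,
`s_{t+1} ~ T(·|s_t, a_t)`). -/
noncomputable def saDist (π : Kernel S A) [IsSFiniteKernel π] (T : Kernel (S × A) S) :
    ℕ → Kernel S (S × A)
  | 0 => stateAction π
  | (n + 1) => (saStep π T) ∘ₖ saDist π T n

/-- The value function `V_M^π(s) = E[∑_t γ^t r(s_t, a_t)]` for trajectories started at `s`
under `(π, T)`. -/
noncomputable def value (π : Kernel S A) [IsSFiniteKernel π] (T : Kernel (S × A) S)
    (r : S × A → ℝ) (γ : ℝ) (s : S) : ℝ :=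
  ∑' t : ℕ, γ ^ t * ∫ x, r x ∂(saDist π T t s)

/-- The expected return `η_M(π) = E_{s ~ μ₀}[V_M^π(s)]`. -/
noncomputable def expReturn (μ₀ : Measure S) (π : Kernel S A) [IsSFiniteKernel π]
    (T : Kernel (S × A) S) (r : S × A → ℝ) (γ : ℝ) : ℝ :=
  ∫ s, value π T r γ s ∂μ₀

/-- The discounted expected uncertainty `ε_u(π) = ∑_t γ^t E_{T,μ₀}^π[u(s_t, a_t)]` over
trajectories generated by `(μ₀, π, T)`. -/
noncomputable def epsU (μ₀ : Measure S) (π : Kernel S A) [IsSFiniteKernel π]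
    (T : Kernel (S × A) S) (u : S × A → ℝ) (γ : ℝ) : ℝ :=
  ∑' t : ℕ, γ ^ t * ∫ x, u x ∂(μ₀.bind (fun s => saDist π T t s))


section Helpers

open Filter Topology

variable {α β γ' : Type*} {mα : MeasurableSpace α} {mβ : MeasurableSpace β}
  {mγ : MeasurableSpace γ'}

lemma nonempty_of_isProbabilityMeasure (μ : Measure α) [IsProbabilityMeasure μ] :
    Nonempty α := by
  rcases isEmpty_or_nonempty α with h | h
  · have h1 : μ Set.univ = 1 := measure_univ
    rw [Set.univ_eq_empty_iff.mpr h, measure_empty] at h1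
    exact absurd h1 (by norm_num)
  · exact h

lemma integrable_of_abs_le (μ : Measure α) [IsFiniteMeasure μ] {f : α → ℝ}
    (hf : Measurable f) {C : ℝ} (h : ∀ x, |f x| ≤ C) : Integrable f μ :=
  ⟨hf.aestronglyMeasurable,
    HasFiniteIntegral.of_bounded (C := C) (ae_of_all _ fun x => by simpa using h x)⟩

lemma abs_integral_le_of_abs_le (μ : Measure α) [IsProbabilityMeasure μ] {f : α → ℝ}
    {C : ℝ} (h : ∀ x, |f x| ≤ C) : |∫ x, f x ∂μ| ≤ C := by
  have h2 := norm_integral_le_of_norm_le_const (μ := μ) (f := f) (C := C)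
      (ae_of_all _ fun x => by simpa using h x)
  simpa using h2

lemma measurable_kintegral (κ : Kernel α β) [IsSFiniteKernel κ] {f : β → ℝ}
    (hf : Measurable f) : Measurable fun a => ∫ b, f b ∂(κ a) :=
  (MeasureTheory.StronglyMeasurable.integral_kernel_prod_right'
    (κ := κ) (f := fun p : α × β => f p.2)
    ((hf.comp measurable_snd).stronglyMeasurable)).measurable

lemma integral_comp' (η : Kernel β γ') [IsMarkovKernel η] (κ : Kernel α β)
    [IsMarkovKernel κ] (a : α) {f : γ' → ℝ} (hf : Measurable f) {C : ℝ}
    (hC : ∀ x, |f x| ≤ C) :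
    ∫ c, f c ∂((η ∘ₖ κ) a) = ∫ b, ∫ c, f c ∂(η b) ∂(κ a) := by
  rw [Kernel.comp_eq_snd_compProd, Kernel.snd_apply,
    integral_map measurable_snd.aemeasurable hf.aestronglyMeasurable,
    ProbabilityTheory.integral_compProd
      (integrable_of_abs_le _ (hf.comp measurable_snd) (fun x => hC _) :
        Integrable (fun z : β × γ' => f z.2) _)]
  simp

lemma bind_eq_comp_const (μ : Measure α) (κ : Kernel α β) :
    μ.bind (fun a => κ a) = (κ ∘ₖ Kernel.const Unit μ) () := by
  rw [Kernel.comp_apply, Kernel.const_apply]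

lemma isProbabilityMeasure_bind (μ : Measure α) [IsProbabilityMeasure μ]
    (κ : Kernel α β) [IsMarkovKernel κ] :
    IsProbabilityMeasure (μ.bind (fun a => κ a)) := by
  rw [bind_eq_comp_const]
  infer_instance

lemma integral_bind' (μ : Measure α) [IsProbabilityMeasure μ] (κ : Kernel α β)
    [IsMarkovKernel κ] {f : β → ℝ} (hf : Measurable f) {C : ℝ} (hC : ∀ x, |f x| ≤ C) :
    ∫ b, f b ∂(μ.bind (fun a => κ a)) = ∫ a, ∫ b, f b ∂(κ a) ∂μ := by
  rw [bind_eq_comp_const, integral_comp' κ (Kernel.const Unit μ) () hf hC,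
    Kernel.const_apply]

lemma bind_comp' (μ : Measure α) (η : Kernel α β) (κ : Kernel β γ') :
    μ.bind (fun a => (κ ∘ₖ η) a) = (μ.bind (fun a => η a)).bind (fun b => κ b) := by
  simp_rw [Kernel.comp_apply]
  exact (Measure.bind_bind η.measurable.aemeasurable κ.measurable.aemeasurable).symm

lemma summable_geom_bdd {f : ℕ → ℝ} {γ C : ℝ} (hγ0 : 0 ≤ γ) (hγ1 : γ < 1)
    (h : ∀ k, |f k| ≤ C) : Summable fun k => γ ^ k * f k := by
  refine Summable.of_norm_bounded
    ((summable_geometric_of_lt_one hγ0 hγ1).mul_left C) (fun k => ?_)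
  show ‖γ ^ k * f k‖ ≤ C * γ ^ k
  rw [Real.norm_eq_abs, abs_mul, abs_pow, abs_of_nonneg hγ0, mul_comm C (γ ^ k)]
  exact mul_le_mul_of_nonneg_left (h k) (pow_nonneg hγ0 k)

lemma tsum_geom_bdd_abs {f : ℕ → ℝ} {γ C : ℝ} (hγ0 : 0 ≤ γ) (hγ1 : γ < 1)
    (h : ∀ k, |f k| ≤ C) : |∑' k, γ ^ k * f k| ≤ C / (1 - γ) := by
  have hgeo : Summable (fun k : ℕ => C * γ ^ k) :=
    (summable_geometric_of_lt_one hγ0 hγ1).mul_left C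
  have habs : ∀ k : ℕ, ‖γ ^ k * f k‖ ≤ C * γ ^ k := fun k => by
    rw [Real.norm_eq_abs, abs_mul, abs_pow, abs_of_nonneg hγ0, mul_comm C (γ ^ k)]
    exact mul_le_mul_of_nonneg_left (h k) (pow_nonneg hγ0 k)
  have h1 : ‖∑' k, γ ^ k * f k‖ ≤ ∑' k : ℕ, C * γ ^ k :=
    tsum_of_norm_bounded hgeo.hasSum habs
  rw [Real.norm_eq_abs, tsum_mul_left, tsum_geometric_of_lt_one hγ0 hγ1] at h1
  rw [div_eq_mul_inv]
  linarith

lemma integral_tsum_of_bounded (μ : Measure α) [IsProbabilityMeasure μ]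
    {g : ℕ → α → ℝ} {c : ℕ → ℝ} (hg : ∀ k, Measurable (g k))
    (hb : ∀ k x, |g k x| ≤ c k) (hc : Summable c) :
    ∫ x, ∑' k, g k x ∂μ = ∑' k, ∫ x, g k x ∂μ := by
  have hne : Nonempty α := _root_.nonempty_of_isProbabilityMeasure μ
  have hcnn : ∀ k, 0 ≤ c k := fun k => le_trans (abs_nonneg _) (hb k hne.some)
  refine integral_tsum (fun k => (hg k).aestronglyMeasurable) ?_
  have h1 : ∀ k : ℕ, ∫⁻ x, ‖g k x‖₊ ∂μ ≤ ENNReal.ofReal (c k) := by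
    intro k
    calc ∫⁻ x, ‖g k x‖₊ ∂μ ≤ ∫⁻ _, ENNReal.ofReal (c k) ∂μ := by
          refine lintegral_mono fun x => ?_
          rw [← enorm_eq_nnnorm, ← ofReal_norm]
          exact ENNReal.ofReal_le_ofReal (by simpa using hb k x)
      _ = ENNReal.ofReal (c k) := by simp
  refine ne_of_lt (lt_of_le_of_lt (ENNReal.tsum_le_tsum h1) ?_)
  rw [← ENNReal.ofReal_tsum_of_nonneg hcnn hc]
  exact ENNReal.ofReal_lt_top

lemma measurable_tsum_real {f : ℕ → α → ℝ} (hf : ∀ n, Measurable (f n))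
    (hs : ∀ x, Summable fun n => f n x) :
    Measurable fun x => ∑' n, f n x := by
  have hT : ∀ x, Tendsto (fun N => ∑ n ∈ Finset.range N, f n x) atTop
      (𝓝 (∑' n, f n x)) := fun x => (hs x).hasSum.tendsto_sum_nat
  exact measurable_of_tendsto_metrizable
    (fun N => Finset.measurable_sum _ (fun i _ => hf i)) (tendsto_pi_nhds.2 hT)

end Helpers

section MDP

variable {S A : Type*} [MeasurableSpace S] [MeasurableSpace A]

instance stateAction.instIsMarkovKernel (π : Kernel S A) [IsMarkovKernel π] :
    IsMarkovKernel (stateAction π) := by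
  rw [stateAction]; infer_instance

instance saStep.instIsMarkovKernel (π : Kernel S A) [IsMarkovKernel π]
    (T : Kernel (S × A) S) [IsMarkovKernel T] : IsMarkovKernel (saStep π T) := by
  rw [saStep]; infer_instance

instance saDist.instIsMarkovKernel (π : Kernel S A) [IsMarkovKernel π]
    (T : Kernel (S × A) S) [IsMarkovKernel T] (n : ℕ) :
    IsMarkovKernel (saDist π T n) := by
  induction n with
  | zero => rw [saDist]; infer_instance
  | succ n ih => rw [saDist]; infer_instance

/-- `k`-fold iterate of the one-step state-action kernel. -/
noncomputable def iterStep (π : Kernel S A) [IsSFiniteKernel π] (T : Kernel (S × A) S) :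
    ℕ → Kernel (S × A) (S × A)
  | 0 => Kernel.id
  | (k + 1) => saStep π T ∘ₖ iterStep π T k

instance iterStep.instIsMarkovKernel (π : Kernel S A) [IsMarkovKernel π]
    (T : Kernel (S × A) S) [IsMarkovKernel T] (k : ℕ) :
    IsMarkovKernel (iterStep π T k) := by
  induction k with
  | zero => rw [iterStep]; infer_instance
  | succ k ih => rw [iterStep]; infer_instance

lemma iterStep_succ' (π : Kernel S A) [IsMarkovKernel π] (T : Kernel (S × A) S)
    [IsMarkovKernel T] (k : ℕ) :
    iterStep π T (k + 1) = iterStep π T k ∘ₖ saStep π T := by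
  induction k with
  | zero => rw [iterStep, iterStep, iterStep, Kernel.comp_id, Kernel.id_comp]
  | succ k ih =>
    show saStep π T ∘ₖ iterStep π T (k + 1) = iterStep π T (k + 1) ∘ₖ saStep π T
    conv_lhs => rw [ih]
    rw [← Kernel.comp_assoc]
    rfl

lemma saDist_eq_iter (π : Kernel S A) [IsMarkovKernel π] (T : Kernel (S × A) S)
    [IsMarkovKernel T] (k : ℕ) :
    saDist π T k = iterStep π T k ∘ₖ stateAction π := by
  induction k with
  | zero => rw [saDist, iterStep, Kernel.id_comp]
  | succ k ih =>
    show saStep π T ∘ₖ saDist π T k = _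
    rw [ih, ← Kernel.comp_assoc]
    rfl

end MDP

theorem simulation_lemma
    (T Th : Kernel (S × A) S) [IsMarkovKernel T] [IsMarkovKernel Th]
    (π : Kernel S A) [IsMarkovKernel π] (μ₀ : Measure S) [IsProbabilityMeasure μ₀]
    (r : S × A → ℝ) (hr_meas : Measurable r) (C : ℝ) (hr_bdd : ∀ x, |r x| ≤ C)
    (γ : ℝ) (hγ0 : 0 ≤ γ) (hγ1 : γ < 1) :
    expReturn μ₀ π Th r γ - expReturn μ₀ π T r γ
      = γ * ∑' t : ℕ, γ ^ t *
          ∫ x, ((∫ s', value π T r γ s' ∂(Th x)) - ∫ s', value π T r γ s' ∂(T x))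
            ∂(μ₀.bind (fun s => saDist π Th t s)) := by
  classical
  have hγ' : 0 < 1 - γ := by linarith
  have hS : Nonempty S := _root_.nonempty_of_isProbabilityMeasure μ₀
  have hSA : Nonempty (S × A) :=
    _root_.nonempty_of_isProbabilityMeasure (stateAction π hS.some)
  have hC : 0 ≤ C := le_trans (abs_nonneg _) (hr_bdd hSA.some)
  set D : ℝ := C / (1 - γ) with hD
  have hgeoC : Summable (fun k : ℕ => γ ^ k * C) :=
    (summable_geometric_of_lt_one hγ0 hγ1).mul_right C
  -- basic bounds on integrals of r against probability kernels
  have hprob : ∀ (κ : Kernel S (S × A)) (_h : IsMarkovKernel κ),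
      IsProbabilityMeasure (μ₀.bind fun s => κ s) := by
    intro κ h
    exact isProbabilityMeasure_bind μ₀ κ
  -- value function facts
  have hVm : ∀ (T' : Kernel (S × A) S) (_h : IsMarkovKernel T'),
      Measurable (value π T' r γ) := by
    intro T' hT'
    have hvd : value π T' r γ
        = fun s => ∑' k, γ ^ k * ∫ y, r y ∂(saDist π T' k s) := rfl
    rw [hvd]
    refine measurable_tsum_real
      (fun k => (measurable_kintegral (saDist π T' k) hr_meas).const_mul _)
      (fun s => summable_geom_bdd hγ0 hγ1
        (fun k => abs_integral_le_of_abs_le _ hr_bdd))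
  have hVb : ∀ (T' : Kernel (S × A) S) (_h : IsMarkovKernel T') (s : S),
      |value π T' r γ s| ≤ D := by
    intro T' hT' s
    exact tsum_geom_bdd_abs hγ0 hγ1 (fun k => abs_integral_le_of_abs_le _ hr_bdd)
  -- the hybrid state-action marginals and their reward integrals
  set b : ℕ → ℕ → ℝ := fun t k =>
    ∫ x, r x ∂(μ₀.bind fun s => (iterStep π T k ∘ₖ saDist π Th t) s) with hbdef
  have hbb : ∀ t k, |b t k| ≤ C := by
    intro t k
    haveI := hprob (iterStep π T k ∘ₖ saDist π Th t) inferInstance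
    exact abs_integral_le_of_abs_le _ hr_bdd
  set J : ℕ → ℝ := fun t => ∑' k, γ ^ k * b t k with hJdef
  set G : ℕ → ℝ := fun t =>
    ∫ x, ((∫ s', value π T r γ s' ∂(Th x)) - ∫ s', value π T r γ s' ∂(T x))
      ∂(μ₀.bind fun s => saDist π Th t s) with hGdef
  -- the fundamental "one-step lookahead" computation
  have hW : ∀ (R : Kernel (S × A) S) (_h : IsMarkovKernel R) (t : ℕ),
      ∫ x, (∫ s', value π T r γ s' ∂(R x)) ∂(μ₀.bind fun s => saDist π Th t s)
        = ∑' k, γ ^ k *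
            ∫ x, r x ∂(μ₀.bind fun s => ((saDist π T k ∘ₖ R) ∘ₖ saDist π Th t) s) := by
    intro R hR t
    haveI := hR
    haveI := hprob (saDist π Th t) inferInstance
    have hstep1 : ∀ x : S × A, ∫ s', value π T r γ s' ∂(R x)
        = ∑' k, γ ^ k * ∫ y, r y ∂((saDist π T k ∘ₖ R) x) := by
      intro x
      have h1 : ∫ s', value π T r γ s' ∂(R x)
          = ∑' k, ∫ s', γ ^ k * ∫ y, r y ∂(saDist π T k s') ∂(R x) :=
        integral_tsum_of_bounded (R x)
          (g := fun k s' => γ ^ k * ∫ y, r y ∂(saDist π T k s'))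
          (c := fun k => γ ^ k * C)
          (fun k => (measurable_kintegral (saDist π T k) hr_meas).const_mul _)
          (fun k s' => by
            rw [abs_mul, abs_pow, abs_of_nonneg hγ0]
            exact mul_le_mul_of_nonneg_left
              (abs_integral_le_of_abs_le _ hr_bdd) (pow_nonneg hγ0 k))
          hgeoC
      rw [h1]
      refine tsum_congr fun k => ?_
      rw [integral_const_mul]
      congr 1
      exact (integral_comp' (saDist π T k) R x hr_meas hr_bdd).symm
    have h2 : ∫ x, (∫ s', value π T r γ s' ∂(R x)) ∂(μ₀.bind fun s => saDist π Th t s)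
        = ∑' k, ∫ x, γ ^ k * ∫ y, r y ∂((saDist π T k ∘ₖ R) x)
            ∂(μ₀.bind fun s => saDist π Th t s) := by
      simp only [hstep1]
      exact integral_tsum_of_bounded _
        (g := fun k x => γ ^ k * ∫ y, r y ∂((saDist π T k ∘ₖ R) x))
        (c := fun k => γ ^ k * C)
        (fun k => (measurable_kintegral (saDist π T k ∘ₖ R) hr_meas).const_mul _)
        (fun k x => by
          rw [abs_mul, abs_pow, abs_of_nonneg hγ0]
          exact mul_le_mul_of_nonneg_left
            (abs_integral_le_of_abs_le _ hr_bdd) (pow_nonneg hγ0 k))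
        hgeoC
    rw [h2]
    refine tsum_congr fun k => ?_
    rw [integral_const_mul]
    congr 1
    rw [bind_comp' μ₀ (saDist π Th t) (saDist π T k ∘ₖ R)]
    exact (integral_bind' (μ₀.bind fun s => saDist π Th t s)
      (saDist π T k ∘ₖ R) hr_meas hr_bdd).symm
  -- kernel identities
  have hk1 : ∀ t k : ℕ, (saDist π T k ∘ₖ Th) ∘ₖ saDist π Th t
      = iterStep π T k ∘ₖ saDist π Th (t + 1) := by
    intro t k
    rw [saDist_eq_iter π T k,
      show saDist π Th (t + 1) = (stateAction π ∘ₖ Th) ∘ₖ saDist π Th t from rfl]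
    simp only [Kernel.comp_assoc]
  have hk2 : ∀ t k : ℕ, (saDist π T k ∘ₖ T) ∘ₖ saDist π Th t
      = iterStep π T (k + 1) ∘ₖ saDist π Th t := by
    intro t k
    rw [saDist_eq_iter π T k, iterStep_succ' π T k,
      show saStep π T = stateAction π ∘ₖ T from rfl]
    simp only [Kernel.comp_assoc]
  -- the expectation of the one-step error
  have hθ : ∀ t, G t = ∑' k, γ ^ k * (b (t + 1) k - b t (k + 1)) := by
    intro t
    haveI := hprob (saDist π Th t) inferInstance
    have hint1 : Integrable (fun x => ∫ s', value π T r γ s' ∂(Th x))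
        (μ₀.bind fun s => saDist π Th t s) :=
      integrable_of_abs_le _ (measurable_kintegral Th (hVm T inferInstance))
        (fun x => abs_integral_le_of_abs_le _ (hVb T inferInstance))
    have hint2 : Integrable (fun x => ∫ s', value π T r γ s' ∂(T x))
        (μ₀.bind fun s => saDist π Th t s) :=
      integrable_of_abs_le _ (measurable_kintegral T (hVm T inferInstance))
        (fun x => abs_integral_le_of_abs_le _ (hVb T inferInstance))
    have hbeq : ∀ t' k : ℕ,
        ∫ x, r x ∂(μ₀.bind fun s => (iterStep π T k ∘ₖ saDist π Th t') s) = b t' k :=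
      fun t' k => by simp only [hbdef]
    rw [hGdef]
    simp only
    rw [integral_sub hint1 hint2, hW Th inferInstance t, hW T inferInstance t]
    simp only [hk1, hk2, hbeq]
    rw [← Summable.tsum_sub (summable_geom_bdd hγ0 hγ1 (fun k => hbb (t + 1) k))
      (summable_geom_bdd hγ0 hγ1 (fun k => hbb t (k + 1)))]
    exact tsum_congr fun k => by ring
  -- bounds and summability
  have hGb : ∀ t, |G t| ≤ 2 * C / (1 - γ) := by
    intro t
    rw [hθ t]
    refine tsum_geom_bdd_abs hγ0 hγ1 (fun k => ?_)
    have h1 := hbb (t + 1) k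
    have h2 := hbb t (k + 1)
    exact (abs_sub _ _).trans (by linarith)
  have hSb : ∀ t, Summable fun k => γ ^ k * b t k :=
    fun t => summable_geom_bdd hγ0 hγ1 (hbb t)
  have hJb : ∀ t, |J t| ≤ D := by
    intro t
    rw [hJdef]
    exact tsum_geom_bdd_abs hγ0 hγ1 (hbb t)
  set H : ℕ → ℝ := fun t => (∑ j ∈ Finset.range t, γ ^ j * b j 0) + γ ^ t * J t
    with hHdef
  have hJrec : ∀ t, J t = b t 0 + γ * ∑' k, γ ^ k * b t (k + 1) := by
    intro t
    rw [hJdef]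
    simp only
    rw [Summable.tsum_eq_zero_add (hSb t)]
    simp only [pow_zero, one_mul]
    congr 1
    rw [← tsum_mul_left]
    exact tsum_congr fun k => by ring
  have hHdiff : ∀ t, H (t + 1) - H t = γ ^ (t + 1) * G t := by
    intro t
    rw [hθ t]
    have h2 : ∑' k, γ ^ k * (b (t + 1) k - b t (k + 1))
        = J (t + 1) - ∑' k, γ ^ k * b t (k + 1) := by
      rw [hJdef]
      simp only [mul_sub]
      exact Summable.tsum_sub (hSb (t + 1)) (summable_geom_bdd hγ0 hγ1 (fun k => hbb t (k + 1)))
    rw [h2, hHdef]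
    simp only [Finset.sum_range_succ]
    rw [hJrec t]
    ring
  have hGsum : Summable fun t => γ ^ t * G t := summable_geom_bdd hγ0 hγ1 hGb
  have hHdsum : Summable fun t => H (t + 1) - H t := by
    have heq : (fun t => H (t + 1) - H t) = fun t => γ * (γ ^ t * G t) := by
      funext t
      rw [hHdiff t]
      ring
    rw [heq]
    exact hGsum.mul_left γ
  -- identification of H 0 and the limit of H
  have hiter0 : iterStep π T 0 = (Kernel.id : Kernel (S × A) (S × A)) := rfl
  have hk0 : ∀ k, iterStep π T k ∘ₖ saDist π Th 0 = saDist π T k := by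
    intro k
    rw [show saDist π Th 0 = stateAction π from rfl, ← saDist_eq_iter]
  have hER : ∀ (T' : Kernel (S × A) S) (_h : IsMarkovKernel T'),
      expReturn μ₀ π T' r γ
        = ∑' k, γ ^ k * ∫ x, r x ∂(μ₀.bind fun s => saDist π T' k s) := by
    intro T' hT'
    haveI := hT'
    have h1 : ∫ s, value π T' r γ s ∂μ₀
        = ∑' k, ∫ s, γ ^ k * ∫ y, r y ∂(saDist π T' k s) ∂μ₀ :=
      integral_tsum_of_bounded μ₀
        (g := fun k s => γ ^ k * ∫ y, r y ∂(saDist π T' k s))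
        (c := fun k => γ ^ k * C)
        (fun k => (measurable_kintegral (saDist π T' k) hr_meas).const_mul _)
        (fun k s => by
          rw [abs_mul, abs_pow, abs_of_nonneg hγ0]
          exact mul_le_mul_of_nonneg_left
            (abs_integral_le_of_abs_le _ hr_bdd) (pow_nonneg hγ0 k))
        hgeoC
    rw [expReturn, h1]
    refine tsum_congr fun k => ?_
    rw [integral_const_mul]
    congr 1
    exact (integral_bind' μ₀ (saDist π T' k) hr_meas hr_bdd).symm
  have hb0k : ∀ k, b 0 k = ∫ x, r x ∂(μ₀.bind fun s => saDist π T k s) := by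
    intro k
    simp only [hbdef, hk0]
  have hbj0 : ∀ j, b j 0 = ∫ x, r x ∂(μ₀.bind fun s => saDist π Th j s) := by
    intro j
    simp only [hbdef, hiter0, Kernel.id_comp]
  have hH0 : H 0 = expReturn μ₀ π T r γ := by
    rw [hHdef]
    simp only [Finset.range_zero, Finset.sum_empty, pow_zero, one_mul, zero_add]
    rw [hER T inferInstance, hJdef]
    exact tsum_congr fun k => by rw [hb0k k]
  have hLim : Filter.Tendsto H Filter.atTop (nhds (expReturn μ₀ π Th r γ)) := by
    have hSa : Summable fun j => γ ^ j * b j 0 :=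
      summable_geom_bdd hγ0 hγ1 (fun j => hbb j 0)
    have h1 := hSa.hasSum.tendsto_sum_nat
    have h2 : Filter.Tendsto (fun t : ℕ => γ ^ t * J t) Filter.atTop (nhds 0) := by
      refine squeeze_zero_norm (a := fun t : ℕ => γ ^ t * D) (fun t => ?_) ?_
      · rw [Real.norm_eq_abs, abs_mul, abs_pow, abs_of_nonneg hγ0]
        exact mul_le_mul_of_nonneg_left (hJb t) (pow_nonneg hγ0 t)
      · simpa using (tendsto_pow_atTop_nhds_zero_of_lt_one hγ0 hγ1).mul_const D
    have h3 := h1.add h2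
    rw [add_zero] at h3
    have h4 : ∑' j, γ ^ j * b j 0 = expReturn μ₀ π Th r γ := by
      rw [hER Th inferInstance]
      exact tsum_congr fun j => by rw [hbj0 j]
    rw [h4] at h3
    rw [hHdef]
    exact h3
  have hTel : HasSum (fun t => H (t + 1) - H t)
      (expReturn μ₀ π Th r γ - expReturn μ₀ π T r γ) := by
    rw [hHdsum.hasSum_iff_tendsto_nat]
    have hps : ∀ n, ∑ t ∈ Finset.range n, (H (t + 1) - H t) = H n - H 0 :=
      fun n => Finset.sum_range_sub H n
    simp only [hps]
    rw [hH0]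
    exact hLim.sub_const _
  have hfin : expReturn μ₀ π Th r γ - expReturn μ₀ π T r γ
      = γ * ∑' t, γ ^ t * G t := by
    rw [← hTel.tsum_eq, ← tsum_mul_left]
    exact tsum_congr fun t => by rw [hHdiff t]; ring
  rw [hfin, hGdef]
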